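/- Let t and a_1, …, a_m be positive integers with Σ_{i=1}^m a_i divisible by t, let S := Σ_{i=1}^m a_i, let M := 13·S², and let n := m+1. Define p ∈ [0,1]^n by p_i := a_i/M⁴ for i ∈ [m] and p_{m+1} := 1/M⁶, define c ∈ ℝ^n by c_i := a_i for i ∈ [m] and c_{m+1} := 2M, and let γ := S²/(t·M⁴) + 6/M⁵. If there exists a Pareto cover B ⊆ {0,1}^{m+1} of μ_p with |B| = t+2 and E_{μ_p}[c_B] ≤ γ, then there exists a partition (I_j)_{j=1}^t of [m] with Σ_{i∈I_j} a_i = S/t for all j ∈ [t]. -/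

import Mathlib

/-- The weight `μ_p({x}) = ∏_{i : x_i = 1} p_i · ∏_{i : x_i = 0} (1 − p_i)` of a point
`x ∈ {0,1}^n` under the product Bernoulli measure `μ_p`. -/
noncomputable def bweight {n : ℕ} (p : Fin n → ℝ) (x : Fin n → Bool) : ℝ :=
  ∏ i, if x i then p i else 1 - p i

/-- The cost `cᵀb` of a binary vector `b ∈ {0,1}^n`. -/
noncomputable def bcost {n : ℕ} (c : Fin n → ℝ) (b : Fin n → Bool) : ℝ :=
  ∑ i, if b i then c i else 0

/-- `c_B(x) = min { cᵀb : b ∈ B, x ≤ b }` (with the convention `sInf ∅ = 0`;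
for a Pareto cover the uncovered points have measure zero). -/
noncomputable def bmin {n : ℕ} (c : Fin n → ℝ) (B : Finset (Fin n → Bool)) (x : Fin n → Bool) : ℝ :=
  sInf (bcost c '' {b | b ∈ B ∧ x ≤ b})

/-- `E_{μ_p}[c_B] = Σ_{x ∈ {0,1}^n} μ_p({x}) · c_B(x)`. -/
noncomputable def bexp {n : ℕ} (p c : Fin n → ℝ) (B : Finset (Fin n → Bool)) : ℝ :=
  ∑ x : Fin n → Bool, bweight p x * bmin c B x

-- `B` is a Pareto cover of `μ_p`: the covered points have total measure `1`.
open Classical in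
noncomputable def bcover {n : ℕ} (p : Fin n → ℝ) (B : Finset (Fin n → Bool)) : Prop :=
  (∑ x : Fin n → Bool, if ∃ b ∈ B, x ≤ b then bweight p x else 0) = 1

section helpers

lemma bset_finite {n : ℕ} (c : Fin n → ℝ) (B : Finset (Fin n → Bool)) (x : Fin n → Bool) :
    (bcost c '' {b | b ∈ B ∧ x ≤ b}).Finite :=
  (B.finite_toSet.subset (fun _ hb => hb.1)).image _

lemma bmin_le {n : ℕ} {c : Fin n → ℝ} {B : Finset (Fin n → Bool)} {x b : Fin n → Bool}
    (hb : b ∈ B) (hxb : x ≤ b) : bmin c B x ≤ bcost c b :=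
  csInf_le (bset_finite c B x).bddBelow ⟨b, ⟨hb, hxb⟩, rfl⟩

lemma le_bmin {n : ℕ} {c : Fin n → ℝ} {B : Finset (Fin n → Bool)} {x : Fin n → Bool} {r : ℝ}
    (hne : ∃ b ∈ B, x ≤ b) (h : ∀ b ∈ B, x ≤ b → r ≤ bcost c b) : r ≤ bmin c B x := by
  obtain ⟨b, hb, hxb⟩ := hne
  exact le_csInf ⟨bcost c b, ⟨b, ⟨hb, hxb⟩, rfl⟩⟩ (by rintro y ⟨b', ⟨hb', hxb'⟩, rfl⟩; exact h b' hb' hxb')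

lemma bmin_mem {n : ℕ} {c : Fin n → ℝ} {B : Finset (Fin n → Bool)} {x : Fin n → Bool}
    (hne : ∃ b ∈ B, x ≤ b) : ∃ b ∈ B, x ≤ b ∧ bcost c b = bmin c B x := by
  obtain ⟨b, hb, hxb⟩ := hne
  have := Set.Nonempty.csInf_mem (s := bcost c '' {b | b ∈ B ∧ x ≤ b})
    ⟨bcost c b, ⟨b, ⟨hb, hxb⟩, rfl⟩⟩ (bset_finite c B x)
  obtain ⟨b', ⟨hb', hxb'⟩, hb'eq⟩ := this
  exact ⟨b', hb', hxb', hb'eq⟩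

lemma bcost_nonneg {n : ℕ} {c : Fin n → ℝ} (hc : ∀ i, 0 ≤ c i) (b : Fin n → Bool) :
    0 ≤ bcost c b :=
  Finset.sum_nonneg fun i _ => by by_cases h : b i <;> simp [h, hc i]

lemma bmin_nonneg {n : ℕ} {c : Fin n → ℝ} (hc : ∀ i, 0 ≤ c i) (B : Finset (Fin n → Bool))
    (x : Fin n → Bool) : 0 ≤ bmin c B x := by
  rcases Set.eq_empty_or_nonempty (bcost c '' {b | b ∈ B ∧ x ≤ b}) with h | h
  · simp [bmin, h, Real.sInf_empty]
  · exact le_csInf h (by rintro y ⟨b', _, rfl⟩; exact bcost_nonneg hc b')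

lemma bweight_sum {n : ℕ} (p : Fin n → ℝ) : ∑ x : Fin n → Bool, bweight p x = 1 := by
  have h := Fintype.prod_sum (f := fun (i : Fin n) (b : Bool) => if b then p i else 1 - p i)
  simp only [bweight]
  rw [← h]
  simp

open Classical in
lemma covered_of_bcover {n : ℕ} {p : Fin n → ℝ} {B : Finset (Fin n → Bool)}
    (hc : bcover p B) (hw : ∀ x, 0 < bweight p x) : ∀ x, ∃ b ∈ B, x ≤ b := by
  intro x
  by_contra hx
  have h1 : ∑ y : Fin n → Bool,
      (bweight p y - if ∃ b ∈ B, y ≤ b then bweight p y else 0) = 0 := by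
    rw [Finset.sum_sub_distrib, bweight_sum, hc]; ring
  have h2 : ∀ y ∈ Finset.univ, (0:ℝ) ≤
      bweight p y - if ∃ b ∈ B, y ≤ b then bweight p y else 0 := by
    intro y _
    by_cases h : ∃ b ∈ B, y ≤ b <;> simp [h, (hw y).le]
  have h3 := (Finset.sum_eq_zero_iff_of_nonneg h2).1 h1 x (Finset.mem_univ x)
  rw [if_neg hx] at h3
  have := hw x
  simp at h3; linarith

lemma weier {ι : Type*} [DecidableEq ι] (s : Finset ι) (f : ι → ℝ) (h0 : ∀ i, 0 ≤ f i)
    (h1 : ∀ i, f i ≤ 1) : 1 - ∑ i ∈ s, f i ≤ ∏ i ∈ s, (1 - f i) := by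
  induction s using Finset.induction with
  | empty => simp
  | insert _ _ hx ih =>
    rename_i x s'
    rw [Finset.sum_insert hx, Finset.prod_insert hx]
    have hs : 0 ≤ ∑ i ∈ s', f i := Finset.sum_nonneg fun i _ => h0 i
    nlinarith [h0 x, h1 x, ih]

lemma int_sq_one {z : ℤ} (hz : z ≠ 0) : 1 ≤ z^2 := by
  rcases lt_or_gt_of_ne hz with h | h <;> nlinarith

lemma sumsq_lb {t : ℕ} (q : ℕ) (s : Fin t → ℕ) (hsum : ∑ j, s j = t * q)
    (j0 : Fin t) (hne : s j0 ≠ q) : t * q^2 + 2 ≤ ∑ j, s j^2 := by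
  have key : (t : ℤ) * q^2 + 2 ≤ ∑ j, (s j : ℤ)^2 := by
    set d : Fin t → ℤ := fun j => (s j : ℤ) - q with hd
    have hdsum : ∑ j, d j = 0 := by
      simp only [hd, Finset.sum_sub_distrib, Finset.sum_const, Finset.card_univ,
        Fintype.card_fin, nsmul_eq_mul]
      have : (∑ j, (s j : ℤ)) = (t : ℤ) * q := by exact_mod_cast congrArg Nat.cast hsum
      rw [this]; ring
    have hexp : ∑ j, (s j : ℤ)^2 = (t:ℤ) * q^2 + ∑ j, d j ^2 := by
      have : ∀ j, (s j : ℤ)^2 = d j ^2 + 2*(q:ℤ)*d j + q^2 := by intro j; simp [hd]; ring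
      rw [Finset.sum_congr rfl fun j _ => this j]
      simp [Finset.sum_add_distrib, ← Finset.mul_sum, hdsum,
        Finset.sum_const, Finset.card_univ]
      ring
    rw [hexp]
    have hj0 : d j0 ≠ 0 := by simp [hd]; omega
    have hj1 : ∃ j1, j1 ≠ j0 ∧ d j1 ≠ 0 := by
      by_contra h
      push_neg at h
      have : ∑ j, d j = d j0 := Finset.sum_eq_single j0 (fun j _ hj => h j hj) (by simp)
      rw [hdsum] at this; exact hj0 this.symm
    obtain ⟨j1, hj1ne, hj1z⟩ := hj1
    have hpair : d j0 ^2 + d j1 ^2 ≤ ∑ j, d j ^2 := by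
      calc d j0 ^2 + d j1 ^2 = ∑ j ∈ ({j0, j1} : Finset (Fin t)), d j ^2 := by
            rw [Finset.sum_pair (Ne.symm hj1ne)]
        _ ≤ ∑ j, d j ^2 := Finset.sum_le_sum_of_subset_of_nonneg (Finset.subset_univ _)
            (fun j _ _ => sq_nonneg _)
    have := int_sq_one hj0
    have := int_sq_one hj1z
    linarith
  exact_mod_cast key

def bdelta {n : ℕ} (k : Fin n) : Fin n → Bool := fun j => decide (j = k)

lemma bdelta_le {n : ℕ} (k : Fin n) (b : Fin n → Bool) : bdelta k ≤ b ↔ b k = true := by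
  constructor
  · intro h
    have := h k
    simp [bdelta] at this
    exact le_antisymm (Bool.le_true _) this
  · intro hb j
    by_cases hj : j = k
    · subst hj; simp [bdelta, hb]
    · simp [bdelta, hj]

lemma bdelta_inj {n : ℕ} : Function.Injective (bdelta (n := n)) := by
  intro k k' h
  have := congrFun h k
  simp [bdelta] at this
  exact this

lemma endgame (S M t q Q : ℝ) (hS1 : 1 ≤ S)
    (hMR : M = 13*S^2) (hSM : S ≤ M) (hR13 : 13 ≤ M)
    (hQ1 : t*q^2 + 2 ≤ Q) (hQ2 : Q ≤ S^2)
    (hB2 : (M^4 - 2*S) * (Q*M+2) ≤ (t*q^2*M+6) * M^4) : False := by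
  have hM0 : (0:ℝ) ≤ M := by linarith
  have hS0 : (0:ℝ) ≤ S := by linarith
  have hM1 : (1:ℝ) ≤ M := by linarith
  have hM4 : (0:ℝ) ≤ M^4 := by positivity
  have hM5 : (0:ℝ) ≤ M^5 := by positivity
  have g1 : (t*q^2 + 2)*M^5 ≤ Q*M^5 := mul_le_mul_of_nonneg_right hQ1 hM5
  have g2 : 2*S*M*Q ≤ 2*S*M*(S^2) :=
    mul_le_mul_of_nonneg_left hQ2 (by positivity)
  have g3 : 26*(S^3*M) = 2*S*M^2 := by rw [hMR]; ring
  have g4 : 2*S*M^2 ≤ 2*M^3 := by nlinarith [mul_nonneg (sq_nonneg M) (sub_nonneg.2 hSM)]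
  have g7 : 13*M^4 ≤ M^5 := by nlinarith [mul_nonneg hM4 (sub_nonneg.2 hR13)]
  have g8 : 13*M^3 ≤ M^4 := by nlinarith [mul_nonneg (mul_nonneg (mul_nonneg hM0 hM0) hM0) (sub_nonneg.2 hR13)]
  have u1 : M ≤ M^2 := by nlinarith [mul_nonneg hM0 (sub_nonneg.2 hM1)]
  have u2 : M^2 ≤ M^3 := by nlinarith [mul_nonneg (mul_nonneg hM0 hM0) (sub_nonneg.2 hM1)]
  have u3 : M^3 ≤ M^4 := by nlinarith [mul_nonneg (mul_nonneg (mul_nonneg hM0 hM0) hM0) (sub_nonneg.2 hM1)]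
  linarith [hB2, g1, g2, g3, g4, g7, g8, u1, u2, u3]

end helpers

set_option maxHeartbeats 4000000 in
open Classical in
theorem stmt13 {m : ℕ} (t : ℕ) (ht : 0 < t) (a : Fin m → ℕ) (ha : ∀ i, 0 < a i)
    (S M : ℕ) (hS : S = ∑ i, a i) (hdvd : t ∣ S) (hM : M = 13 * S^2)
    (p c : Fin (m+1) → ℝ)
    (hp1 : ∀ i : Fin m, p i.castSucc = (a i : ℝ) / (M : ℝ)^4)
    (hp2 : p (Fin.last m) = 1 / (M : ℝ)^6)
    (hc1 : ∀ i : Fin m, c i.castSucc = (a i : ℝ))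
    (hc2 : c (Fin.last m) = 2 * (M : ℝ))
    (γ : ℝ) (hγ : γ = (S : ℝ)^2 / ((t : ℝ) * (M : ℝ)^4) + 6 / (M : ℝ)^5)
    (hex : ∃ B : Finset (Fin (m+1) → Bool),
      bcover p B ∧ B.card = t + 2 ∧ bexp p c B ≤ γ) :
    ∃ I : Fin t → Finset (Fin m),
      (∀ i : Fin m, ∃! j, i ∈ I j) ∧ ∀ j, t * ∑ i ∈ I j, a i = S := by
  -- trivial case m = 0
  rcases Nat.eq_zero_or_pos m with hm | hm
  · subst hm
    refine ⟨fun _ => ∅, fun i => i.elim0, fun j => by simp [hS]⟩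
  obtain ⟨B, hcov, hcard, hE⟩ := hex
  -- basic numeric facts
  have hSn : 1 ≤ S := by
    have := ha ⟨0, hm⟩
    have h2 : a ⟨0, hm⟩ ≤ S := hS ▸ Finset.single_le_sum (fun i _ => Nat.zero_le _)
      (Finset.mem_univ _)
    omega
  have hS1 : (1:ℝ) ≤ S := by exact_mod_cast hSn
  have hMR : (M:ℝ) = 13 * (S:ℝ)^2 := by rw [hM]; push_cast; ring
  have hR13 : (13:ℝ) ≤ (M:ℝ) := by nlinarith
  have hR0 : (0:ℝ) < (M:ℝ) := by linarith
  have htR : (1:ℝ) ≤ (t:ℝ) := by exact_mod_cast ht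
  have haS : ∀ i, (a i : ℝ) ≤ (S:ℝ) := by
    intro i
    have : a i ≤ S := hS ▸ Finset.single_le_sum (fun i _ => Nat.zero_le _) (Finset.mem_univ i)
    exact_mod_cast this
  have ha1 : ∀ i, (1:ℝ) ≤ (a i : ℝ) := fun i => by exact_mod_cast ha i
  have hSM : (S:ℝ) ≤ (M:ℝ) := by nlinarith
  have hM4 : (0:ℝ) < (M:ℝ)^4 := by positivity
  have hM5 : (0:ℝ) < (M:ℝ)^5 := by positivity
  have hM6 : (0:ℝ) < (M:ℝ)^6 := by positivity
  have hM3one : (1:ℝ) ≤ (M:ℝ)^3 := one_le_pow₀ (by linarith)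
  have hMM4 : (M:ℝ) ≤ (M:ℝ)^4 := by nlinarith
  -- facts about p
  have hp_pos : ∀ k, 0 < p k := by
    intro k
    induction k using Fin.lastCases with
    | last => rw [hp2]; positivity
    | cast i => rw [hp1]; have := ha1 i; positivity
  have hp_ub : ∀ k, p k ≤ (S:ℝ)/(M:ℝ)^4 := by
    intro k
    induction k using Fin.lastCases with
    | last =>
      rw [hp2, div_le_div_iff₀ hM6 hM4]
      nlinarith
    | cast i =>
      rw [hp1]
      gcongr
      exact_mod_cast haS i
  have hp_lt1 : ∀ k, p k < 1 := by
    intro k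
    have := hp_ub k
    have h2 : (S:ℝ)/(M:ℝ)^4 < 1 := by rw [div_lt_one hM4]; nlinarith
    linarith
  have hp_sum : ∑ k, p k ≤ 2*(S:ℝ)/(M:ℝ)^4 := by
    rw [Fin.sum_univ_castSucc]
    have h1 : ∑ i : Fin m, p i.castSucc = (S:ℝ)/(M:ℝ)^4 := by
      rw [Finset.sum_congr rfl (fun i _ => hp1 i), ← Finset.sum_div, hS]
      push_cast; ring
    rw [h1, hp2]
    have h2 : 1/(M:ℝ)^6 ≤ (S:ℝ)/(M:ℝ)^4 := by
      rw [div_le_div_iff₀ hM6 hM4]; nlinarith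
    have h3 : 2*(S:ℝ)/(M:ℝ)^4 = (S:ℝ)/(M:ℝ)^4 + (S:ℝ)/(M:ℝ)^4 := by ring
    linarith
  -- facts about c
  have hc_nonneg : ∀ k, 0 ≤ c k := by
    intro k
    induction k using Fin.lastCases with
    | last => rw [hc2]; linarith
    | cast i => rw [hc1]; linarith [ha1 i]
  have hc_one : ∀ k, (1:ℝ) ≤ c k := by
    intro k
    induction k using Fin.lastCases with
    | last => rw [hc2]; linarith
    | cast i => rw [hc1]; exact ha1 i
  -- the product P
  set P : ℝ := ∏ k, (1 - p k) with hPdef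
  have hP_le1 : P ≤ 1 :=
    Finset.prod_le_one (fun k _ => by linarith [hp_lt1 k]) (fun k _ => by linarith [hp_pos k])
  have hP_lb : 1 - 2*(S:ℝ)/(M:ℝ)^4 ≤ P := by
    have := weier Finset.univ p (fun k => (hp_pos k).le) (fun k => (hp_lt1 k).le)
    linarith
  have hM3four : (4:ℝ) ≤ (M:ℝ)^3 := by nlinarith [hR13]
  have h4M : 4*(M:ℝ) ≤ (M:ℝ)^4 := by nlinarith [mul_le_mul_of_nonneg_left hM3four hR0.le]
  have hP_half : (1:ℝ)/2 ≤ P := by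
    have h1 : 2*(S:ℝ)/(M:ℝ)^4 ≤ 1/2 := by
      rw [div_le_div_iff₀ hM4 (by norm_num : (0:ℝ) < 2)]
      linarith [hSM, h4M]
    linarith
  have hP0 : 0 ≤ P := by linarith
  -- positivity of weights and coverage
  have hw_pos : ∀ x, 0 < bweight p x := by
    intro x
    refine Finset.prod_pos fun k _ => ?_
    by_cases h : x k = true
    · rw [if_pos h]; exact hp_pos k
    · rw [if_neg h]; linarith [hp_lt1 k]
  have hall : ∀ x, ∃ b ∈ B, x ≤ b := covered_of_bcover hcov hw_pos
  -- every single term of bexp is at most γ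
  have hγ0 : 0 ≤ γ := by
    rw [hγ]; positivity
  have hkey : ∀ x, bweight p x * bmin c B x ≤ γ := by
    intro x
    have h1 : bweight p x * bmin c B x ≤ bexp p c B :=
      Finset.single_le_sum (f := fun y => bweight p y * bmin c B y)
        (fun y _ => mul_nonneg (hw_pos y).le (bmin_nonneg hc_nonneg B y)) (Finset.mem_univ x)
    linarith
  -- γ is small
  have hγub : γ ≤ 1/(2*(M:ℝ)^3) := by
    have hM3 : (0:ℝ) < (M:ℝ)^3 := by positivity
    have h1 : (S:ℝ)^2/((t:ℝ)*(M:ℝ)^4) ≤ 1/(13*(M:ℝ)^3) := by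
      rw [div_le_div_iff₀ (by positivity) (by positivity)]
      have e : (S:ℝ)^2*(13*(M:ℝ)^3) = (M:ℝ)^4 := by rw [hMR]; ring
      nlinarith [e, hM4, htR]
    have h2 : 6/(M:ℝ)^5 ≤ 6/(169*(M:ℝ)^3) := by
      rw [div_le_div_iff₀ hM5 (by positivity)]
      have e : (169:ℝ) ≤ (M:ℝ)^2 := by nlinarith
      nlinarith [e, hM3]
    have h3 : 1/(13*(M:ℝ)^3) + 6/(169*(M:ℝ)^3) ≤ 1/(2*(M:ℝ)^3) := by
      have hu : (0:ℝ) ≤ 1/(M:ℝ)^3 := by positivity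
      have e1 : 1/(13*(M:ℝ)^3) = (1/13)*(1/(M:ℝ)^3) := by ring
      have e2 : 6/(169*(M:ℝ)^3) = (6/169)*(1/(M:ℝ)^3) := by ring
      have e3 : 1/(2*(M:ℝ)^3) = (1/2)*(1/(M:ℝ)^3) := by ring
      rw [e1, e2, e3]
      nlinarith [hu]
    rw [hγ]; linarith
  -- weight of delta points
  have hw_delta : ∀ k, p k * P ≤ bweight p (bdelta k) := by
    intro k
    have h1 : bweight p (bdelta k) = p k * ∏ j ∈ {k}ᶜ, (1 - p j) := by
      rw [bweight, Fintype.prod_eq_mul_prod_compl k]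
      congr 1
      · simp [bdelta]
      · refine Finset.prod_congr rfl fun j hj => ?_
        simp only [Finset.mem_compl, Finset.mem_singleton] at hj
        simp [bdelta, hj]
    have h2 : P ≤ ∏ j ∈ {k}ᶜ, (1 - p j) := by
      have h3 : P = (1 - p k) * ∏ j ∈ {k}ᶜ, (1 - p j) := Fintype.prod_eq_mul_prod_compl k _
      have h4 : 0 ≤ ∏ j ∈ {k}ᶜ, (1 - p j) :=
        Finset.prod_nonneg fun j _ => by linarith [hp_lt1 j]
      nlinarith [hp_pos k]
    rw [h1]
    exact mul_le_mul_of_nonneg_left h2 (hp_pos k).le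
  -- minimizers for the delta points
  have hminmem : ∀ i : Fin m, ∃ b ∈ B, bdelta i.castSucc ≤ b ∧
      bcost c b = bmin c B (bdelta i.castSucc) := fun i => bmin_mem (hall _)
  choose f hfB hfle hfcost using hminmem
  have hfi : ∀ i, f i i.castSucc = true := fun i => (bdelta_le _ _).1 (hfle i)
  -- the zero vector and its minimizer
  obtain ⟨b0, hb0B, _, hb0cost⟩ := bmin_mem (c := c) (hall (fun _ => false))
  have hwzero : bweight p (fun _ => false) = P := by
    rw [bweight]; simp [hPdef]
  have hb0small : bcost c b0 ≤ 2*γ := by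
    have h1 := hkey (fun _ => false)
    rw [hwzero, ← hb0cost] at h1
    nlinarith [bcost_nonneg hc_nonneg b0]
  have hb0false : ∀ k, b0 k = false := by
    intro k
    by_contra hk
    rw [Bool.not_eq_false] at hk
    have h1 : c k ≤ bcost c b0 := by
      rw [bcost]
      have := Finset.single_le_sum (f := fun j => if b0 j then c j else 0)
        (fun j _ => by by_cases h : b0 j <;> simp [h, hc_nonneg j]) (Finset.mem_univ k)
      simpa [hk] using this
    have h2 := hc_one k
    have hM3 : (13:ℝ)^3 ≤ (M:ℝ)^3 := by nlinarith
    have h3 : 1/(2*(M:ℝ)^3) < 1/2 := by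
      rw [div_lt_div_iff₀ (by positivity) (by norm_num)]
      nlinarith
    linarith
  -- the vector covering the last delta
  obtain ⟨u, huB, hule⟩ := hall (bdelta (Fin.last m))
  have hulast : u (Fin.last m) = true := (bdelta_le _ _).1 hule
  have hu_ne_b0 : u ≠ b0 := by
    intro h
    rw [h, hb0false] at hulast
    exact Bool.false_ne_true hulast
  -- cost of any vector with last coordinate true is at least 2M
  have hcost_last : ∀ b : Fin (m+1) → Bool, b (Fin.last m) = true → 2*(M:ℝ) ≤ bcost c b := by
    intro b hb
    rw [bcost]
    have := Finset.single_le_sum (f := fun j => if b j then c j else 0)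
      (fun j _ => by by_cases h : b j <;> simp [h, hc_nonneg j]) (Finset.mem_univ (Fin.last m))
    simpa [hb, hc2] using this
  -- f i has last coordinate false
  have hflast : ∀ i, f i (Fin.last m) = false := by
    intro i
    by_contra hk
    rw [Bool.not_eq_false] at hk
    have h1 := hcost_last (f i) hk
    have h2 := hkey (bdelta i.castSucc)
    rw [← hfcost i] at h2
    have h3 : (1/(M:ℝ)^4 * (1/2)) * (2*(M:ℝ)) ≤ bweight p (bdelta i.castSucc) * bcost c (f i) := by
      apply mul_le_mul _ h1 (by positivity) (hw_pos _).le
      calc 1/(M:ℝ)^4 * (1/2) ≤ p i.castSucc * P := by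
            apply mul_le_mul _ hP_half (by norm_num) (hp_pos _).le
            rw [hp1, div_le_div_iff₀ hM4 hM4]
            nlinarith [ha1 i]
        _ ≤ bweight p (bdelta i.castSucc) := hw_delta _
    have h4 : (1/(M:ℝ)^4 * (1/2)) * (2*(M:ℝ)) = 1/(M:ℝ)^3 := by
      field_simp
    have h5 : 1/(2*(M:ℝ)^3) < 1/(M:ℝ)^3 := by
      rw [div_lt_div_iff₀ (by positivity) (by positivity)]
      linarith [hM3one]
    linarith
  have hfne_b0 : ∀ i, f i ≠ b0 := by
    intro i h
    have := hfi i
    rw [h, hb0false] at this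
    exact Bool.false_ne_true this
  have hfne_u : ∀ i, f i ≠ u := by
    intro i h
    have h1 := hflast i
    rw [h, hulast] at h1
    simp at h1
  -- the reduced cover
  have huB' : u ∈ B.erase b0 := Finset.mem_erase.2 ⟨hu_ne_b0, huB⟩
  set B' : Finset (Fin (m+1) → Bool) := (B.erase b0).erase u with hB'def
  have hB'card : B'.card = t := by
    rw [hB'def, Finset.card_erase_of_mem huB', Finset.card_erase_of_mem hb0B, hcard]
    omega
  have hfB' : ∀ i, f i ∈ B' := fun i =>
    Finset.mem_erase.2 ⟨hfne_u i, Finset.mem_erase.2 ⟨hfne_b0 i, hfB i⟩⟩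
  have e : {x // x ∈ B'} ≃ Fin t := B'.equivFinOfCardEq hB'card
  set g : Fin m → Fin t := fun i => e ⟨f i, hfB' i⟩ with hgdef
  set bval : Fin t → (Fin (m+1) → Bool) := fun j => (e.symm j : {x // x ∈ B'}).1 with hbvaldef
  have hgval : ∀ i, bval (g i) = f i := fun i => by
    rw [hbvaldef, hgdef]; simp only [Equiv.symm_apply_apply]
  set I : Fin t → Finset (Fin m) := fun j => Finset.univ.filter (fun i => g i = j) with hIdef
  have hImem : ∀ i j, i ∈ I j ↔ g i = j := fun i j => by simp [hIdef]
  refine ⟨I, fun i => ⟨g i, (hImem i _).2 rfl, fun j hj => ((hImem i j).1 hj).symm⟩, ?_⟩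
  -- the fiber sums
  set s : Fin t → ℕ := fun j => ∑ i ∈ I j, a i with hsdef
  have hssum : ∑ j, s j = S := by
    rw [hS]
    exact Finset.sum_fiberwise Finset.univ g a
  obtain ⟨q, hq⟩ := hdvd
  have hq1 : 1 ≤ q := by
    rcases Nat.eq_zero_or_pos q with h | h
    · rw [h, mul_zero] at hq; omega
    · omega
  have hq1R : (1:ℝ) ≤ (q:ℝ) := by exact_mod_cast hq1
  have hSq : (S:ℝ) = (t:ℝ)*(q:ℝ) := by exact_mod_cast hq
  -- suppose some fiber has the wrong sum, derive a contradiction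
  by_contra hcon
  push_neg at hcon
  obtain ⟨j0, hj0⟩ := hcon
  have hj0' : s j0 ≠ q := by
    intro h
    exact hj0 (by rw [show (∑ i ∈ I j0, a i) = s j0 from rfl, h, ← hq])
  have hQn : t*q^2 + 2 ≤ ∑ j, s j^2 := sumsq_lb q s (by rw [hssum, hq]) j0 hj0'
  have hsS : ∀ j, s j ≤ S := fun j =>
    hssum ▸ Finset.single_le_sum (fun _ _ => Nat.zero_le _) (Finset.mem_univ j)
  have hQubn : ∑ j, s j^2 ≤ S^2 := by
    calc ∑ j, s j^2 ≤ ∑ j, s j * S := Finset.sum_le_sum (fun j _ => by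
          have := hsS j; nlinarith)
      _ = S^2 := by rw [← Finset.sum_mul, hssum]; ring
  set Q : ℝ := ∑ j, ((s j : ℝ))^2 with hQdef
  have hQcast : Q = ((∑ j, s j^2 : ℕ) : ℝ) := by rw [hQdef]; push_cast; rfl
  have hQ1 : (t:ℝ)*(q:ℝ)^2 + 2 ≤ Q := by
    rw [hQcast]
    exact_mod_cast hQn
  have hQ2 : Q ≤ (S:ℝ)^2 := by
    rw [hQcast]
    exact_mod_cast hQubn
  have hQ0 : 0 ≤ Q := by rw [hQdef]; positivity
  -- lower bound the cost of each fiber's covering vector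
  have hcost_lb : ∀ j, (s j : ℝ) ≤ bcost c (bval j) := by
    intro j
    rcases Finset.eq_empty_or_nonempty (I j) with h | hne
    · rw [hsdef]
      simp only [h, Finset.sum_empty, Nat.cast_zero]
      exact bcost_nonneg hc_nonneg _
    obtain ⟨i0, hi0⟩ := hne
    have hstep : ∑ k ∈ (I j).image Fin.castSucc, (if bval j k then c k else 0)
        ≤ bcost c (bval j) :=
      Finset.sum_le_sum_of_subset_of_nonneg (Finset.subset_univ _)
        (fun k _ _ => by by_cases hbk : bval j k = true <;> simp [hbk, hc_nonneg k])
    have himg : ∑ k ∈ (I j).image Fin.castSucc, (if bval j k then c k else 0)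
        = ∑ i ∈ I j, (if bval j i.castSucc then c i.castSucc else 0) :=
      Finset.sum_image (fun i _ i' _ h => Fin.castSucc_injective m h)
    have hval : ∀ i ∈ I j, (if bval j i.castSucc then c i.castSucc else 0) = (a i : ℝ) := by
      intro i hi
      have hfe : bval j = f i := by rw [← (hImem i j).1 hi]; exact hgval i
      rw [hfe, if_pos (hfi i), hc1]
    calc (s j : ℝ) = ∑ i ∈ I j, (a i:ℝ) := by rw [hsdef]; push_cast; rfl
      _ = ∑ i ∈ I j, (if bval j i.castSucc then c i.castSucc else 0) :=
          (Finset.sum_congr rfl hval).symm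
      _ = ∑ k ∈ (I j).image Fin.castSucc, (if bval j k then c k else 0) := himg.symm
      _ ≤ bcost c (bval j) := hstep
  -- lower bound the total assigned cost by the sum of squares
  have hsum_lb : Q ≤ ∑ i, (a i : ℝ) * bcost c (f i) := by
    calc Q = ∑ j, ((s j:ℝ))^2 := rfl
      _ ≤ ∑ j, ∑ i ∈ I j, (a i:ℝ) * bcost c (f i) := by
          refine Finset.sum_le_sum (fun j _ => ?_)
          have hce : ∀ i ∈ I j, (a i:ℝ) * bcost c (f i) = (a i:ℝ) * bcost c (bval j) := by
            intro i hi
            have hfe : bval j = f i := by rw [← (hImem i j).1 hi]; exact hgval i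
            rw [hfe]
          rw [Finset.sum_congr rfl hce, ← Finset.sum_mul]
          have hcast : ∑ i ∈ I j, (a i:ℝ) = (s j : ℝ) := by rw [hsdef]; push_cast; rfl
          rw [hcast]
          have h1 := hcost_lb j
          have h2 : (0:ℝ) ≤ (s j:ℝ) := Nat.cast_nonneg _
          nlinarith
      _ = ∑ i, (a i:ℝ) * bcost c (f i) := Finset.sum_fiberwise Finset.univ g _
  -- the main expectation chain
  have hstep1 : ∑ k : Fin (m+1), bweight p (bdelta k) * bmin c B (bdelta k) ≤ bexp p c B := by
    have h1 : ∑ x ∈ Finset.univ.image bdelta,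
        bweight p x * bmin c B x ≤ bexp p c B :=
      Finset.sum_le_sum_of_subset_of_nonneg (Finset.subset_univ _)
        (fun y _ _ => mul_nonneg (hw_pos y).le (bmin_nonneg hc_nonneg B y))
    rwa [Finset.sum_image (fun k _ k' _ h => bdelta_inj h)] at h1
  have hstep3i : ∀ i : Fin m, P * ((a i:ℝ)/(M:ℝ)^4 * bcost c (f i))
      ≤ bweight p (bdelta i.castSucc) * bmin c B (bdelta i.castSucc) := by
    intro i
    rw [← hfcost i]
    have h1 : p i.castSucc * P * bcost c (f i)
        ≤ bweight p (bdelta i.castSucc) * bcost c (f i) :=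
      mul_le_mul_of_nonneg_right (hw_delta _) (bcost_nonneg hc_nonneg _)
    have h2 : p i.castSucc * P * bcost c (f i) = P * ((a i:ℝ)/(M:ℝ)^4 * bcost c (f i)) := by
      rw [hp1]; ring
    linarith
  have hstep3l : P * (2/(M:ℝ)^5)
      ≤ bweight p (bdelta (Fin.last m)) * bmin c B (bdelta (Fin.last m)) := by
    have hbm : 2*(M:ℝ) ≤ bmin c B (bdelta (Fin.last m)) :=
      le_bmin (hall _) (fun b hb hle => hcost_last b ((bdelta_le _ _).1 hle))
    have h1 : (p (Fin.last m) * P) * (2*(M:ℝ))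
        ≤ bweight p (bdelta (Fin.last m)) * bmin c B (bdelta (Fin.last m)) :=
      mul_le_mul (hw_delta _) hbm (by positivity) (hw_pos _).le
    have h2 : (p (Fin.last m) * P) * (2*(M:ℝ)) = P * (2/(M:ℝ)^5) := by
      rw [hp2]; field_simp
    linarith
  have hmain : P * ((∑ i, (a i:ℝ) * bcost c (f i))/(M:ℝ)^4 + 2/(M:ℝ)^5) ≤ γ := by
    calc P * ((∑ i, (a i:ℝ) * bcost c (f i))/(M:ℝ)^4 + 2/(M:ℝ)^5)
        = ∑ i, P * ((a i:ℝ)/(M:ℝ)^4 * bcost c (f i)) + P * (2/(M:ℝ)^5) := by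
          rw [mul_add, Finset.sum_div, Finset.mul_sum]
          congr 1
          exact Finset.sum_congr rfl fun i _ => by ring
      _ ≤ (∑ i : Fin m, bweight p (bdelta i.castSucc) * bmin c B (bdelta i.castSucc))
            + bweight p (bdelta (Fin.last m)) * bmin c B (bdelta (Fin.last m)) :=
          add_le_add (Finset.sum_le_sum fun i _ => hstep3i i) hstep3l
      _ = ∑ k : Fin (m+1), bweight p (bdelta k) * bmin c B (bdelta k) := by
          rw [Fin.sum_univ_castSucc]
      _ ≤ bexp p c B := hstep1
      _ ≤ γ := hE
  -- substitute and clear denominators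
  have hchain : P * (Q/(M:ℝ)^4 + 2/(M:ℝ)^5) ≤ γ := by
    refine le_trans (mul_le_mul_of_nonneg_left ?_ hP0) hmain
    have : Q/(M:ℝ)^4 ≤ (∑ i, (a i:ℝ) * bcost c (f i))/(M:ℝ)^4 := by gcongr
    linarith
  have ht0 : (t:ℝ) ≠ 0 := by positivity
  have hM0 : (M:ℝ) ≠ 0 := ne_of_gt hR0
  have hγ' : γ = (t:ℝ)*(q:ℝ)^2/(M:ℝ)^4 + 6/(M:ℝ)^5 := by
    rw [hγ, hSq]
    field_simp
  have hPR : (M:ℝ)^4 - 2*(S:ℝ) ≤ P * (M:ℝ)^4 := by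
    have h := mul_le_mul_of_nonneg_right hP_lb hM4.le
    have e : (1 - 2*(S:ℝ)/(M:ℝ)^4) * (M:ℝ)^4 = (M:ℝ)^4 - 2*(S:ℝ) := by field_simp
    linarith
  have hA : P * (Q*(M:ℝ) + 2) ≤ (t:ℝ)*(q:ℝ)^2*(M:ℝ) + 6 := by
    have h := mul_le_mul_of_nonneg_right hchain hM5.le
    have e1 : P * (Q/(M:ℝ)^4 + 2/(M:ℝ)^5) * (M:ℝ)^5 = P * (Q*(M:ℝ)+2) := by
      field_simp
    have e2 : ((t:ℝ)*(q:ℝ)^2/(M:ℝ)^4 + 6/(M:ℝ)^5) * (M:ℝ)^5 = (t:ℝ)*(q:ℝ)^2*(M:ℝ) + 6 := by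
      field_simp
    rw [hγ'] at h
    linarith [h, e1, e2]
  have hQM2 : (0:ℝ) ≤ Q*(M:ℝ) + 2 := by
    have := mul_nonneg hQ0 hR0.le
    linarith
  have hB2 : ((M:ℝ)^4 - 2*(S:ℝ)) * (Q*(M:ℝ)+2) ≤ ((t:ℝ)*(q:ℝ)^2*(M:ℝ)+6) * (M:ℝ)^4 := by
    have h1 := mul_le_mul_of_nonneg_right hPR hQM2
    have h2 := mul_le_mul_of_nonneg_right hA hM4.le
    have e : P * (M:ℝ)^4 * (Q*(M:ℝ)+2) = P * (Q*(M:ℝ)+2) * (M:ℝ)^4 := by ring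
    linarith [h1, h2, e]
  exact endgame (S:ℝ) (M:ℝ) (t:ℝ) (q:ℝ) Q hS1 hMR hSM hR13 hQ1 hQ2 hB2
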